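/- Let 1 < p ≤ q and 0 ≤ a⁻ ≤ a⁺, and set H⁻(s) = s^p + a⁻·s^q and H⁺(s) = s^p + a⁺·s^q, with shifted N-functions H⁻_σ and H⁺_σ for σ ≥ 0. Then there exists a constant c = c(p,q) > 0 such that for all σ ≥ 0 and s ≥ 0: H⁺_σ(s) ≤ c·( H⁻_σ(s) + (a⁺ − a⁻)·(σ^q + s^q) ). -/
import Mathlib


open MeasureTheory Real Set

/-- The shifted N-function `H_σ(s) = ∫₀^s H'(σ+t)·t/(σ+t) dt`, expressed through the
derivative `H'`. -/
noncomputable def shifted (H' : ℝ → ℝ) (σ s : ℝ) : ℝ :=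
  ∫ t in (0:ℝ)..s, H' (σ + t) * t / (σ + t)

/-- First derivative `H'(s) = p·s^{p−1} + a·q·s^{q−1}` of the double phase function
`H(s) = s^p + a·s^q`. -/
noncomputable def dpH' (p q a s : ℝ) : ℝ :=
  p * s ^ (p - 1) + a * q * s ^ (q - 1)

/-- **Comparison of shifted double phase functions with different coefficients.**
For `1 < p ≤ q` and `0 ≤ a⁻ ≤ a⁺`, with `H^±(s) = s^p + a^±·s^q`, there is `c = c(p,q)`
such that `H⁺_σ(s) ≤ c(H⁻_σ(s) + (a⁺−a⁻)(σ^q + s^q))` for all `σ, s ≥ 0`. -/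
theorem shifted_double_phase_comparison (p q : ℝ) (hp : 1 < p) (hpq : p ≤ q) :
    ∃ c : ℝ, 0 < c ∧ ∀ aminus aplus : ℝ, 0 ≤ aminus → aminus ≤ aplus →
      ∀ σ s : ℝ, 0 ≤ σ → 0 ≤ s →
        shifted (dpH' p q aplus) σ s ≤
          c * (shifted (dpH' p q aminus) σ s + (aplus - aminus) * (σ ^ q + s ^ q)) := by
  have hq1 : 1 < q := lt_of_lt_of_le hp hpq
  have hq0 : 0 < q := by linarith
  have hq1' : 0 ≤ q - 1 := by linarith
  have hp1' : 0 ≤ p - 1 := by linarith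
  have h2q : (0:ℝ) < (2:ℝ) ^ q := Real.rpow_pos_of_pos (by norm_num) q
  refine ⟨1 + q * (2:ℝ) ^ q, by positivity, ?_⟩
  intro am ap ham hamap σ s hσ hs
  have hap : 0 ≤ ap := ham.trans hamap
  have hD : 0 ≤ ap - am := by linarith
  -- nonnegativity of shifted for a ≥ 0
  have hf_nonneg : ∀ a : ℝ, 0 ≤ a → ∀ t, 0 ≤ t → t ≤ s →
      0 ≤ dpH' p q a (σ + t) * t / (σ + t) := by
    intro a ha t ht0 hts
    have hσt : 0 ≤ σ + t := by linarith
    have : 0 ≤ dpH' p q a (σ + t) := by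
      unfold dpH'
      have := Real.rpow_nonneg hσt (p - 1)
      have := Real.rpow_nonneg hσt (q - 1)
      positivity
    exact div_nonneg (mul_nonneg this ht0) hσt
  have hSm : 0 ≤ shifted (dpH' p q am) σ s := by
    apply intervalIntegral.integral_nonneg hs
    intro t ht
    exact hf_nonneg am ham t ht.1 ht.2
  have hTnn : 0 ≤ σ ^ q + s ^ q := by
    have := Real.rpow_nonneg hσ q
    have := Real.rpow_nonneg hs q
    linarith
  rcases eq_or_lt_of_le hs with rfl | hs0
  · -- s = 0
    have : ∀ a : ℝ, shifted (dpH' p q a) σ 0 = 0 := fun a =>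
      intervalIntegral.integral_same
    rw [this]
    have h1 : (0:ℝ) ≤ (ap - am) * (σ ^ q + 0 ^ q) := mul_nonneg hD hTnn
    nlinarith [mul_nonneg (mul_nonneg hq0.le h2q.le) (add_nonneg hSm (mul_nonneg hD hTnn))]
  · -- s > 0
    have hσs : 0 < σ + s := by linarith
    -- integrability
    have hmeas : ∀ a : ℝ,
        Measurable (fun t => dpH' p q a (σ + t) * t / (σ + t)) := by
      intro a
      unfold dpH'
      fun_prop
    have hmono : ∀ a : ℝ, 0 ≤ a → ∀ t, 0 ≤ t → t ≤ s →
        dpH' p q a (σ + t) ≤ dpH' p q a (σ + s) := by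
      intro a ha t ht0 hts
      unfold dpH'
      gcongr
    have hratio : ∀ t : ℝ, 0 ≤ t → t / (σ + t) ≤ 1 := by
      intro t ht0
      have hσt : 0 ≤ σ + t := by linarith
      rcases eq_or_lt_of_le hσt with h | h
      · rw [← h]; simp
      · exact div_le_one_of_le₀ (by linarith) hσt
    have hint : ∀ a : ℝ, 0 ≤ a →
        IntervalIntegrable (fun t => dpH' p q a (σ + t) * t / (σ + t)) volume 0 s := by
      intro a ha
      rw [intervalIntegrable_iff, uIoc_of_le hs]
      apply Measure.integrableOn_of_bounded (M := dpH' p q a (σ + s)) measure_Ioc_lt_top.ne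
        (hmeas a).aestronglyMeasurable
      filter_upwards [ae_restrict_mem measurableSet_Ioc] with t ht
      have ht0 : 0 ≤ t := ht.1.le
      have hts : t ≤ s := ht.2
      rw [Real.norm_eq_abs, abs_of_nonneg (hf_nonneg a ha t ht0 hts)]
      rw [mul_div_assoc]
      calc dpH' p q a (σ + t) * (t / (σ + t)) ≤ dpH' p q a (σ + s) * 1 := by
            apply mul_le_mul (hmono a ha t ht0 hts) (hratio t ht0)
              (div_nonneg ht0 (by linarith))
            -- 0 ≤ dpH' p q a (σ + s)
            have h1 := Real.rpow_nonneg hσs.le (p - 1)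
            have h2 := Real.rpow_nonneg hσs.le (q - 1)
            unfold dpH'; positivity
        _ = dpH' p q a (σ + s) := mul_one _
    -- pointwise bound
    have key : ∀ t ∈ Icc (0:ℝ) s,
        dpH' p q ap (σ + t) * t / (σ + t) ≤
          dpH' p q am (σ + t) * t / (σ + t) + (ap - am) * (q * (σ + s) ^ (q - 1)) := by
      intro t ht
      obtain ⟨ht0, hts⟩ := ht
      have hσt : 0 ≤ σ + t := by linarith
      have hd : dpH' p q ap (σ + t) * t / (σ + t) =
          dpH' p q am (σ + t) * t / (σ + t) +
            ((ap - am) * (q * (σ + t) ^ (q - 1))) * (t / (σ + t)) := by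
        unfold dpH'; ring
      rw [hd]
      have h1 : (ap - am) * (q * (σ + t) ^ (q - 1)) ≤
          (ap - am) * (q * (σ + s) ^ (q - 1)) := by
        gcongr
      have h2 : ((ap - am) * (q * (σ + t) ^ (q - 1))) * (t / (σ + t)) ≤
          ((ap - am) * (q * (σ + s) ^ (q - 1))) * 1 := by
        apply mul_le_mul h1 (hratio t ht0) (div_nonneg ht0 hσt)
        have := Real.rpow_nonneg hσs.le (q - 1)
        positivity
      rw [mul_one] at h2
      linarith
    have hstep : shifted (dpH' p q ap) σ s ≤
        shifted (dpH' p q am) σ s + s * ((ap - am) * (q * (σ + s) ^ (q - 1))) := by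
      have h3 : shifted (dpH' p q ap) σ s ≤
          ∫ t in (0:ℝ)..s, (dpH' p q am (σ + t) * t / (σ + t) +
            (ap - am) * (q * (σ + s) ^ (q - 1))) :=
        intervalIntegral.integral_mono_on hs (hint ap hap)
          ((hint am ham).add intervalIntegrable_const) key
      rwa [intervalIntegral.integral_add (hint am ham) intervalIntegrable_const,
        intervalIntegral.integral_const, smul_eq_mul, sub_zero] at h3
    -- bound the extra term
    have hpow : (σ + s) ^ q = (σ + s) * (σ + s) ^ (q - 1) := by
      have : q = 1 + (q - 1) := by ring
      rw [this, Real.rpow_add hσs, Real.rpow_one]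
      ring_nf
    have hbound : s * ((ap - am) * (q * (σ + s) ^ (q - 1))) ≤
        (ap - am) * (q * ((2:ℝ) ^ q * (σ ^ q + s ^ q))) := by
      have e1 : s * ((ap - am) * (q * (σ + s) ^ (q - 1))) ≤
          (ap - am) * (q * ((σ + s) * (σ + s) ^ (q - 1))) := by
        have h := Real.rpow_nonneg hσs.le (q - 1)
        nlinarith [mul_nonneg (mul_nonneg (mul_nonneg hD hq0.le) h) hσ]
      rw [← hpow] at e1
      have e2 : (σ + s) ^ q ≤ (2:ℝ) ^ q * (σ ^ q + s ^ q) := by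
        have hmax : σ + s ≤ 2 * max σ s := by
          have := le_max_left σ s; have := le_max_right σ s; linarith
        have hmax0 : 0 ≤ max σ s := le_trans hσ (le_max_left σ s)
        calc (σ + s) ^ q ≤ (2 * max σ s) ^ q :=
              Real.rpow_le_rpow (by linarith) hmax hq0.le
          _ = (2:ℝ) ^ q * (max σ s) ^ q := Real.mul_rpow (by norm_num) hmax0
          _ ≤ (2:ℝ) ^ q * (σ ^ q + s ^ q) := by
              apply mul_le_mul_of_nonneg_left _ h2q.le
              rcases max_cases σ s with ⟨h, _⟩ | ⟨h, _⟩ <;> rw [h]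
              · have := Real.rpow_nonneg hs q; linarith
              · have := Real.rpow_nonneg hσ q; linarith
      calc s * ((ap - am) * (q * (σ + s) ^ (q - 1))) ≤ (ap - am) * (q * (σ + s) ^ q) := e1
        _ ≤ (ap - am) * (q * ((2:ℝ) ^ q * (σ ^ q + s ^ q))) := by
            apply mul_le_mul_of_nonneg_left _ hD
            exact mul_le_mul_of_nonneg_left e2 hq0.le
    -- combine
    have final : shifted (dpH' p q ap) σ s ≤
        shifted (dpH' p q am) σ s + q * (2:ℝ) ^ q * ((ap - am) * (σ ^ q + s ^ q)) := by
      calc shifted (dpH' p q ap) σ s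
          ≤ shifted (dpH' p q am) σ s + s * ((ap - am) * (q * (σ + s) ^ (q - 1))) := hstep
        _ ≤ shifted (dpH' p q am) σ s + q * (2:ℝ) ^ q * ((ap - am) * (σ ^ q + s ^ q)) := by
            have := hbound; nlinarith
    nlinarith [mul_nonneg (mul_nonneg hq0.le h2q.le) hSm, mul_nonneg hD hTnn]
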